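/- Let X be a set and T an overlap-free subset of ⟨X⟩\{1}. Then an element w of the free monoid ⟨X⟩ becomes right-invertible in ⟨X : i(T)⟩ (i.e., its image under the natural homomorphism has a right inverse) if and only if w is a product of nonempty initial substrings (prefixes, not necessarily proper) of elements of T. Dually, w becomes left-invertible in ⟨X : i(T)⟩ if and only if w is a product of nonempty final substrings (suffixes) of elements of T. -/

import Mathlib

namespace AdjoinInverses

variable {X : Type*}

/-- The embedding of the free monoid on `X` into the free monoid on `X ⊕ S`. -/
def emb (S : Set (FreeMonoid X)) : FreeMonoid X →* FreeMonoid (X ⊕ S) :=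
  FreeMonoid.map Sum.inl

/-- The generator `i(w)` corresponding to `w ∈ S`. -/
def igen (S : Set (FreeMonoid X)) (w : S) : FreeMonoid (X ⊕ S) :=
  FreeMonoid.of (Sum.inr w)

/-- The defining relations `w ⬝ i(w) = 1` and `i(w) ⬝ w = 1` for `w ∈ S`. -/
inductive InvRel (S : Set (FreeMonoid X)) : FreeMonoid (X ⊕ S) → FreeMonoid (X ⊕ S) → Prop
  | mul_inv (w : S) : InvRel S (emb S w.1 * igen S w) 1
  | inv_mul (w : S) : InvRel S (igen S w * emb S w.1) 1

/-- The congruence generated by the defining relations. -/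
def invCon (S : Set (FreeMonoid X)) : Con (FreeMonoid (X ⊕ S)) := conGen (InvRel S)

/-- The monoid `⟨X : i(S)⟩` obtained from the free monoid on `X` by universally
adjoining a two-sided inverse to each element of `S`. -/
def AdjInv (S : Set (FreeMonoid X)) : Type _ := (invCon S).Quotient

instance (S : Set (FreeMonoid X)) : Monoid (AdjInv S) := Con.monoid _

/-- The natural homomorphism `⟨X⟩ → ⟨X : i(S)⟩`. -/
def natHom (S : Set (FreeMonoid X)) : FreeMonoid X →* AdjInv S :=
  ((invCon S).mk').comp (emb S)

/-- The adjoined inverse `i(w)`, as an element of `⟨X : i(S)⟩`. -/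
def invElt (S : Set (FreeMonoid X)) (w : S) : AdjInv S :=
  (invCon S).mk' (igen S w)

/-- `S` and `S'` are inverse-equivalent: each element of `S'` becomes invertible in
`⟨X : i(S)⟩` and each element of `S` becomes invertible in `⟨X : i(S')⟩`. -/
def InvEquiv (S S' : Set (FreeMonoid X)) : Prop :=
  (∀ w ∈ S', IsUnit (natHom S w)) ∧ ∀ w ∈ S, IsUnit (natHom S' w)

/-- Two (nonidentity) elements of the free monoid overlap: one can be written `a*b`
and the other `b*c` with `b ≠ 1` and at most one of `a`, `c` equal to `1`. -/
def Overlap (u v : FreeMonoid X) : Prop :=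
  ∃ a b c : FreeMonoid X, b ≠ 1 ∧ (a ≠ 1 ∨ c ≠ 1) ∧ u = a * b ∧ v = b * c

/-- A set `T` is overlap-free if no pair of elements of `T` (distinct or not) overlap. -/
def OverlapFree (T : Set (FreeMonoid X)) : Prop :=
  ∀ u ∈ T, ∀ v ∈ T, ¬ Overlap u v

namespace Scratch
open List Relation
variable (T : Set (FreeMonoid X))
def et (t : ↥T) : List (X ⊕ ↥T) := (FreeMonoid.toList (t : FreeMonoid X)).map Sum.inl
def rt (t : ↥T) : X ⊕ ↥T := Sum.inr t
def IsRule (l : List (X ⊕ ↥T)) : Prop :=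
  ∃ t : T, l = et T t ++ [rt T t] ∨ l = rt T t :: et T t
def Step (u v : List (X ⊕ ↥T)) : Prop :=
  ∃ a l b, IsRule T l ∧ u = a ++ l ++ b ∧ v = a ++ b
variable {T}
lemma inr_not_mem_map {t : ↥T} {s : List X} : rt T t ∉ s.map Sum.inl := by simp [rt]
lemma not_mem_et {t t' : ↥T} : rt T t' ∉ et T t := by simp [et, rt]
lemma toList_ne_nil (h1 : (1:FreeMonoid X) ∉ T) (t : ↥T) :
    FreeMonoid.toList (t : FreeMonoid X) ≠ [] := by
  intro h
  have : (t : FreeMonoid X) = 1 := FreeMonoid.toList.injective (by simpa using h)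
  exact h1 (this ▸ t.2)
lemma et_eq_et {t t' : ↥T} (h : et T t = et T t') : t = t' := by
  apply Subtype.ext; apply FreeMonoid.toList.injective
  exact List.map_injective_iff.mpr Sum.inl_injective h
lemma ovfree (hT : ∀ u ∈ T, ∀ v ∈ T, ¬ Overlap u v) {t t' : ↥T} {a s c : List X}
    (ht : FreeMonoid.toList (t : FreeMonoid X) = a ++ s)
    (ht' : FreeMonoid.toList (t' : FreeMonoid X) = s ++ c)
    (hs : s ≠ []) : a = [] ∧ c = [] := by
  by_contra hac
  rw [not_and_or] at hac
  refine hT _ t.2 _ t'.2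
    ⟨FreeMonoid.ofList a, FreeMonoid.ofList s, FreeMonoid.ofList c, ?_, ?_, ?_, ?_⟩
  · intro h; exact hs (by simpa using congrArg FreeMonoid.toList h)
  · rcases hac with h | h
    · exact Or.inl fun he => h (by simpa using congrArg FreeMonoid.toList he)
    · exact Or.inr fun he => h (by simpa using congrArg FreeMonoid.toList he)
  · apply FreeMonoid.toList.injective; simpa using ht
  · apply FreeMonoid.toList.injective; simpa using ht'

-- containment case: l₂ (with padding c, e) sits inside l₁
lemma contain_case (h1 : (1:FreeMonoid X) ∉ T)
    {l₁ l₂ c e : List (X ⊕ ↥T)} (r₁ : IsRule T l₁) (r₂ : IsRule T l₂)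
    (h : l₁ = c ++ (l₂ ++ e)) : c = [] ∧ e = [] := by
  obtain ⟨t, rfl | rfl⟩ := r₁ <;> obtain ⟨t', rfl | rfl⟩ := r₂
  · -- A t  ⊇  A t'
    rcases eq_nil_or_concat e with rfl | ⟨e', x, rfl⟩
    · rw [append_nil] at h
      have h' : et T t ++ [rt T t] = (c ++ et T t') ++ [rt T t'] := by
        simpa [append_assoc] using h
      obtain ⟨h₂, h₃⟩ := append_inj' h' rfl
      have ht' : t = t' := by simpa [rt] using h₃
      subst ht'
      have : c = [] := by
        have := congrArg length h₂; simp at this; simpa using this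
      exact ⟨this, rfl⟩
    · exfalso
      have h' : et T t ++ [rt T t] =
          (c ++ (et T t' ++ [rt T t'] ++ e')) ++ [x] := by
        simpa [concat_eq_append, append_assoc] using h
      obtain ⟨h₂, -⟩ := append_inj' h' rfl
      exact not_mem_et (t := t) (t' := t') (by rw [h₂]; simp)
  · -- A t ⊇ B t'
    exfalso
    rcases eq_nil_or_concat e with rfl | ⟨e', x, rfl⟩
    · rw [append_nil] at h
      rcases eq_nil_or_concat (FreeMonoid.toList (t' : FreeMonoid X)) with h0 | ⟨s, z, hs⟩
      · exact toList_ne_nil h1 t' h0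
      · have h' : et T t ++ [rt T t] =
            (c ++ (rt T t' :: (s.map Sum.inl))) ++ [Sum.inl z] := by
          simpa [et, hs, concat_eq_append, append_assoc] using h
        obtain ⟨-, h₃⟩ := append_inj' h' rfl
        simp [rt] at h₃
    · have h' : et T t ++ [rt T t] =
          (c ++ ((rt T t' :: et T t') ++ e')) ++ [x] := by
        simpa [concat_eq_append, append_assoc] using h
      obtain ⟨h₂, -⟩ := append_inj' h' rfl
      exact not_mem_et (t := t) (t' := t') (by rw [h₂]; simp)
  · -- B t ⊇ A t'
    exfalso
    rcases c with _ | ⟨y, c'⟩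
    · rcases h0 : FreeMonoid.toList (t' : FreeMonoid X) with _ | ⟨z, s⟩
      · exact toList_ne_nil h1 t' h0
      · rw [nil_append] at h
        have h' : rt T t :: et T t = Sum.inl z :: (s.map Sum.inl ++ ([rt T t'] ++ e)) := by
          simpa [et, h0, append_assoc] using h
        have := (List.cons.injEq _ _ _ _ ▸ h').1
        simp [rt] at this
    · have hy : y = rt T t ∧ c' ++ (et T t' ++ [rt T t'] ++ e) = et T t := by
        have := h; rw [cons_append] at this
        exact ⟨(List.cons.injEq _ _ _ _ ▸ this).1.symm, ((List.cons.injEq _ _ _ _ ▸ this).2).symm⟩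
      exact not_mem_et (t := t) (t' := t') (by rw [← hy.2]; simp)
  · -- B t ⊇ B t'
    rcases c with _ | ⟨y, c'⟩
    · rw [nil_append] at h
      have h' : rt T t = rt T t' ∧ et T t = et T t' ++ e := by
        rw [cons_append] at h
        exact ⟨(List.cons.injEq _ _ _ _ ▸ h).1, (List.cons.injEq _ _ _ _ ▸ h).2⟩
      have ht' : t = t' := by simpa [rt] using h'.1
      subst ht'
      have : e = [] := by
        have := congrArg length h'.2; simp at this; simpa using this
      exact ⟨rfl, this⟩
    · exfalso
      have hy : c' ++ ((rt T t' :: et T t') ++ e) = et T t := by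
        have := h; rw [cons_append] at this
        exact ((List.cons.injEq _ _ _ _ ▸ this).2).symm
      exact not_mem_et (t := t) (t' := t') (by rw [← hy]; simp)


-- overlap case: l₁ = c ++ d, l₂ = d ++ e, d ≠ []  ⇒  c = e
lemma overlap_case (h1 : (1:FreeMonoid X) ∉ T)
    (hT : ∀ u ∈ T, ∀ v ∈ T, ¬ Overlap u v)
    {l₁ l₂ c d e : List (X ⊕ ↥T)} (r₁ : IsRule T l₁) (r₂ : IsRule T l₂)
    (hc : l₁ = c ++ d) (he : l₂ = d ++ e) (hd : d ≠ []) : c = e := by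
  obtain ⟨t, rfl | rfl⟩ := r₁
  · -- l₁ = A t
    rcases eq_nil_or_concat d with rfl | ⟨d₀, x, rfl⟩
    · exact absurd rfl hd
    have h' : et T t ++ [rt T t] = (c ++ d₀) ++ [x] := by
      simpa [concat_eq_append, append_assoc] using hc
    obtain ⟨hc₀, hx⟩ := append_inj' h' rfl
    have hx' : rt T t = x := by simpa using hx
    subst hx'
    obtain ⟨t', rfl | rfl⟩ := r₂
    · -- l₂ = A t'
      rcases eq_nil_or_concat e with rfl | ⟨e', y, rfl⟩
      · rw [append_nil] at he
        have h2' : et T t' ++ [rt T t'] = d₀ ++ [rt T t] := by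
          simpa [concat_eq_append] using he
        obtain ⟨h₂, h₃⟩ := append_inj' h2' rfl
        have ht' : t' = t := by simpa [rt] using h₃
        subst ht'
        rw [h₂] at hc₀
        exact List.self_eq_append_left.mp hc₀
      · exfalso
        have h2' : et T t' ++ [rt T t'] = (d₀ ++ [rt T t] ++ e') ++ [y] := by
          simpa [concat_eq_append, append_assoc] using he
        obtain ⟨h₂, -⟩ := append_inj' h2' rfl
        exact not_mem_et (t := t') (t' := t) (by rw [h₂]; simp)
    · -- l₂ = B t'
      rcases d₀ with _ | ⟨z, d₀'⟩
      · have h2' : rt T t' :: et T t' = rt T t :: e := by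
          simpa [concat_eq_append] using he
        obtain ⟨h₂, h₃⟩ := List.cons_eq_cons.mp h2'
        have ht' : t' = t := by simpa [rt] using h₂
        subst ht'
        rw [append_nil] at hc₀
        rw [← hc₀, h₃]
      · exfalso
        have h2' : rt T t' :: et T t' = z :: (d₀' ++ ([rt T t] ++ e)) := by
          simpa [concat_eq_append, append_assoc] using he
        obtain ⟨h₂, -⟩ := List.cons_eq_cons.mp h2'
        have : z ∈ et T t := by rw [hc₀]; simp
        rw [← h₂] at this
        exact not_mem_et (t := t) (t' := t') this
  · -- l₁ = B t
    rcases c with _ | ⟨y, c'⟩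
    · rw [nil_append] at hc
      subst hc
      obtain ⟨t', rfl | rfl⟩ := r₂
      · exfalso
        rcases h0 : FreeMonoid.toList (t' : FreeMonoid X) with _ | ⟨z, s⟩
        · exact toList_ne_nil h1 t' h0
        · have h2' : (Sum.inl z : X ⊕ ↥T) :: (s.map Sum.inl ++ [rt T t']) =
              rt T t :: (et T t ++ e) := by simpa [et, h0, append_assoc] using he
          have := (List.cons_eq_cons.mp h2').1
          simp [rt] at this
      · have h2' : rt T t' :: et T t' = rt T t :: (et T t ++ e) := by
          simpa [append_assoc] using he
        obtain ⟨h₂, h₃⟩ := List.cons_eq_cons.mp h2'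
        have ht' : t' = t := by simpa [rt] using h₂
        subst ht'
        have : e = [] := (List.self_eq_append_right.mp h₃).symm ▸ rfl
        rw [this]
    · -- c = y :: c'
      have h2' : rt T t :: et T t = y :: (c' ++ d) := by simpa using hc
      obtain ⟨hy, hce⟩ := List.cons_eq_cons.mp h2'
      obtain ⟨s₁, s₂, hsplit, hm₁, hm₂⟩ := List.map_eq_append_iff.mp hce
      have hs₂ : s₂ ≠ [] := by rintro rfl; simp at hm₂; exact hd hm₂
      obtain ⟨t', rfl | rfl⟩ := r₂
      · -- l₂ = A t'
        rcases eq_nil_or_concat e with rfl | ⟨e', y', rfl⟩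
        · exfalso
          rw [append_nil] at he
          have : rt T t' ∈ d := by rw [← he]; simp
          rw [← hm₂] at this
          exact inr_not_mem_map this
        · have h3' : et T t' ++ [rt T t'] = (s₂.map Sum.inl ++ e') ++ [y'] := by
            simpa [concat_eq_append, append_assoc, ← hm₂] using he
          obtain ⟨h₂, h₃⟩ := append_inj' h3' rfl
          obtain ⟨u₁, u₂, hsplit', hn₁, hn₂⟩ := List.map_eq_append_iff.mp h₂
          have hu₁ : u₁ = s₂ := List.map_injective_iff.mpr Sum.inl_injective hn₁
          subst hu₁
          obtain ⟨hs₁, hu₂⟩ := ovfree hT hsplit hsplit' hs₂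
          subst hs₁; subst hu₂
          have ht' : t' = t := by
            apply Subtype.ext; apply FreeMonoid.toList.injective
            rw [hsplit', hsplit]; simp
          subst ht'
          have hc' : c' = [] := by simpa using hm₁.symm
          have he' : e' = [] := by simpa using hn₂.symm
          have hy' : y' = rt T t' := by simpa using h₃.symm
          simp [hc', he', hy', ← hy]
      · -- l₂ = B t'
        exfalso
        rcases s₂ with _ | ⟨z, s₂'⟩
        · exact hs₂ rfl
        · have h3' : rt T t' :: et T t' = Sum.inl z :: (s₂'.map Sum.inl ++ e) := by
            simpa [← hm₂, append_assoc] using he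
          have := (List.cons_eq_cons.mp h3').1
          simp [rt] at this


lemma main_aux (h1 : (1:FreeMonoid X) ∉ T) (hT : ∀ u ∈ T, ∀ v ∈ T, ¬ Overlap u v)
    {l₁ l₂ a₁ b₁ b₂ c : List (X ⊕ ↥T)} (r₁ : IsRule T l₁) (r₂ : IsRule T l₂)
    (he : l₁ ++ b₁ = c ++ (l₂ ++ b₂)) :
    a₁ ++ b₁ = (a₁ ++ c) ++ b₂ ∨
      ∃ d, Step T (a₁ ++ b₁) d ∧ Step T ((a₁ ++ c) ++ b₂) d := by
  rcases append_eq_append_iff.mp he with ⟨m, hc, hb₁⟩ | ⟨d, hl₁, hrest⟩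
  · right
    refine ⟨a₁ ++ (m ++ b₂), ⟨a₁ ++ m, l₂, b₂, r₂, ?_, by simp [append_assoc]⟩,
      ⟨a₁, l₁, m ++ b₂, r₁, ?_, by simp [append_assoc]⟩⟩
    · rw [hb₁]; simp [append_assoc]
    · rw [hc]; simp [append_assoc]
  · rcases eq_or_ne d [] with rfl | hd
    · right
      rw [append_nil] at hl₁
      rw [nil_append] at hrest
      refine ⟨a₁ ++ b₂, ⟨a₁, l₂, b₂, r₂, ?_, rfl⟩, ⟨a₁, l₁, b₂, r₁, ?_, rfl⟩⟩
      · rw [← hrest, append_assoc]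
      · rw [hl₁]
    · rcases append_eq_append_iff.mp hrest with ⟨e, hde, hb₂⟩ | ⟨e, hl₂, hb₁⟩
      · -- containment : l₁ = c ++ (l₂ ++ e)
        obtain ⟨rfl, rfl⟩ := contain_case h1 r₁ r₂ (by rw [hl₁, hde])
        left
        rw [nil_append] at hb₂
        rw [hb₂]; simp
      · -- overlap : l₁ = c ++ d, l₂ = d ++ e
        have hce : c = e := overlap_case h1 hT r₁ r₂ hl₁ hl₂ hd
        left
        rw [hb₁, hce]; simp [append_assoc]

lemma diamond (h1 : (1:FreeMonoid X) ∉ T) (hT : ∀ u ∈ T, ∀ v ∈ T, ¬ Overlap u v)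
    {u v₁ v₂ : List (X ⊕ ↥T)} (s₁ : Step T u v₁) (s₂ : Step T u v₂) :
    v₁ = v₂ ∨ ∃ d, Step T v₁ d ∧ Step T v₂ d := by
  obtain ⟨a₁, l₁, b₁, r₁, rfl, rfl⟩ := s₁
  obtain ⟨a₂, l₂, b₂, r₂, hu, rfl⟩ := s₂
  rw [append_assoc, append_assoc] at hu
  rcases append_eq_append_iff.mp hu with ⟨c, rfl, he⟩ | ⟨c, rfl, he⟩
  · exact main_aux h1 hT r₁ r₂ he
  · exact (main_aux h1 hT r₂ r₁ he).imp Eq.symm (fun ⟨d, h₂, h₃⟩ => ⟨d, h₃, h₂⟩)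


lemma semiconfluent (h1 : (1:FreeMonoid X) ∉ T) (hT : ∀ u ∈ T, ∀ v ∈ T, ¬ Overlap u v) :
    ∀ a b c : List (X ⊕ ↥T), Step T a b → Step T a c →
      ∃ d, Relation.ReflGen (Step T) b d ∧ Relation.ReflTransGen (Step T) c d := by
  intro a b c hab hac
  rcases diamond h1 hT hab hac with rfl | ⟨d, hbd, hcd⟩
  · exact ⟨b, .refl, .refl⟩
  · exact ⟨d, .single hbd, .single hcd⟩

lemma step_append_right {u v : List (X ⊕ ↥T)} (w : List (X ⊕ ↥T)) (h : Step T u v) :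
    Step T (u ++ w) (v ++ w) := by
  obtain ⟨a, l, b, r, rfl, rfl⟩ := h
  exact ⟨a, l, b ++ w, r, by simp [append_assoc], by simp [append_assoc]⟩

lemma step_append_left {u v : List (X ⊕ ↥T)} (w : List (X ⊕ ↥T)) (h : Step T u v) :
    Step T (w ++ u) (w ++ v) := by
  obtain ⟨a, l, b, r, rfl, rfl⟩ := h
  exact ⟨w ++ a, l, b, r, by simp [append_assoc], by simp [append_assoc]⟩

lemma rtg_append {u v x y : List (X ⊕ ↥T)}
    (h : Relation.ReflTransGen (Step T) u v) (h' : Relation.ReflTransGen (Step T) x y) :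
    Relation.ReflTransGen (Step T) (u ++ x) (v ++ y) := by
  have h₁ : Relation.ReflTransGen (Step T) (u ++ x) (v ++ x) :=
    Relation.ReflTransGen.lift (· ++ x) (fun _ _ hs => step_append_right x hs) _ _ h
  have h₂ : Relation.ReflTransGen (Step T) (v ++ x) (v ++ y) :=
    Relation.ReflTransGen.lift (v ++ ·) (fun _ _ hs => step_append_left v hs) _ _ h'
  exact h₁.trans h₂

variable (T) in
def JRel (u v : FreeMonoid (X ⊕ ↥T)) : Prop :=
  Relation.Join (Relation.ReflTransGen (Step T)) (FreeMonoid.toList u) (FreeMonoid.toList v)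

lemma invCon_le_jrel (h1 : (1:FreeMonoid X) ∉ T) (hT : ∀ u ∈ T, ∀ v ∈ T, ¬ Overlap u v)
    {u v : FreeMonoid (X ⊕ ↥T)} (h : invCon T u v) : JRel T u v := by
  have hequiv : Equivalence (Relation.Join (Relation.ReflTransGen (Step T))) :=
    Relation.equivalence_join_reflTransGen (semiconfluent h1 hT)
  let c : Con (FreeMonoid (X ⊕ ↥T)) :=
    { r := JRel T
      iseqv := ⟨fun u => hequiv.refl _, fun h => hequiv.symm h, fun h h' => hequiv.trans h h'⟩
      mul' := by
        rintro w x y z ⟨d₁, hw, hx⟩ ⟨d₂, hy, hz⟩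
        exact ⟨d₁ ++ d₂, by rw [FreeMonoid.toList_mul]; exact rtg_append hw hy,
          by rw [FreeMonoid.toList_mul]; exact rtg_append hx hz⟩ }
  refine Con.le_def.mp ((Con.conGen_le (c := c)).mpr ?_) h
  rintro x y (⟨t⟩ | ⟨t⟩)
  · refine ⟨[], Relation.ReflTransGen.single ⟨[], et T t ++ [rt T t], [], ⟨t, Or.inl rfl⟩, ?_, rfl⟩, ?_⟩
    · simp [FreeMonoid.toList_mul, et, rt, emb, igen, FreeMonoid.toList_map]
    · exact Relation.ReflTransGen.refl
  · refine ⟨[], Relation.ReflTransGen.single ⟨[], rt T t :: et T t, [], ⟨t, Or.inr rfl⟩, ?_, rfl⟩, ?_⟩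
    · simp [FreeMonoid.toList_mul, et, rt, emb, igen, FreeMonoid.toList_map]
    · exact Relation.ReflTransGen.refl

lemma isRule_ne_nil {l : List (X ⊕ ↥T)} (r : IsRule T l) : l ≠ [] := by
  obtain ⟨t, rfl | rfl⟩ := r <;> simp

lemma nil_irreducible {v : List (X ⊕ ↥T)} (h : Step T [] v) : False := by
  obtain ⟨a, l, b, r, hnil, -⟩ := h
  rcases append_eq_nil_iff.mp ((append_eq_nil_iff.mp hnil.symm).1) with ⟨-, hl⟩
  exact isRule_ne_nil r hl

lemma reduces_to_nil (h1 : (1:FreeMonoid X) ∉ T) (hT : ∀ u ∈ T, ∀ v ∈ T, ¬ Overlap u v)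
    {u : FreeMonoid (X ⊕ ↥T)} (h : invCon T u 1) :
    Relation.ReflTransGen (Step T) (FreeMonoid.toList u) [] := by
  obtain ⟨d, h₁, h₂⟩ := invCon_le_jrel h1 hT h
  rw [FreeMonoid.toList_one] at h₂
  have hd : d = [] := by
    rcases h₂.cases_head with rfl | ⟨c', hc', -⟩
    · rfl
    · exact (nil_irreducible hc').elim
  rw [hd] at h₁
  exact h₁


lemma ofList_ne_one {w : List X} (hw : w ≠ []) : FreeMonoid.ofList w ≠ 1 :=
  fun h' => hw (by simpa using congrArg FreeMonoid.toList h')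

lemma ofList_append' (w₁ w₂ : List X) :
    FreeMonoid.ofList (w₁ ++ w₂) = FreeMonoid.ofList w₁ * FreeMonoid.ofList w₂ := by
  apply FreeMonoid.toList.injective; simp

lemma mem_prefix_set {t : ↥T} {w₂ q : List X}
    (h : FreeMonoid.toList (t : FreeMonoid X) = w₂ ++ q) (hw : w₂ ≠ []) :
    FreeMonoid.ofList w₂ ∈ {p : FreeMonoid X | p ≠ 1 ∧ ∃ t ∈ T, ∃ q, t = p * q} := by
  refine ⟨ofList_ne_one hw, t.1, t.2, FreeMonoid.ofList q, ?_⟩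
  apply FreeMonoid.toList.injective; simpa using h

lemma mem_suffix_set {t : ↥T} {p w₁ : List X}
    (h : FreeMonoid.toList (t : FreeMonoid X) = p ++ w₁) (hw : w₁ ≠ []) :
    FreeMonoid.ofList w₁ ∈ {q : FreeMonoid X | q ≠ 1 ∧ ∃ t ∈ T, ∃ p, t = p * q} := by
  refine ⟨ofList_ne_one hw, t.1, t.2, FreeMonoid.ofList p, ?_⟩
  apply FreeMonoid.toList.injective; simpa using h

lemma map_inj_et {t : ↥T} {x : List X} (h : x.map Sum.inl = et T t) :
    x = FreeMonoid.toList (t : FreeMonoid X) :=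
  List.map_injective_iff.mpr Sum.inl_injective h

lemma extract_prefix : ∀ {u : List (X ⊕ ↥T)},
    Relation.ReflTransGen (Step T) u [] →
    ∀ {w : List X} {v : List (X ⊕ ↥T)}, u = w.map Sum.inl ++ v →
    FreeMonoid.ofList w ∈
      Submonoid.closure {p : FreeMonoid X | p ≠ 1 ∧ ∃ t ∈ T, ∃ q, t = p * q} := by
  intro u hu
  induction hu using Relation.ReflTransGen.head_induction_on with
  | refl =>
    intro w v h
    have hw : w = [] := by
      cases w with
      | nil => rfl
      | cons a w' => simp at h
    subst hw
    simpa using Submonoid.one_mem _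
  | head hstep htail ih =>
    intro w v h
    obtain ⟨a, l, b, r, hu', rfl⟩ := hstep
    rw [hu'] at h
    have h' : w.map Sum.inl ++ v = a ++ (l ++ b) := by rw [← h]; simp [append_assoc]
    rcases append_eq_append_iff.mp h' with ⟨m, ha, hv⟩ | ⟨m, hw, hlb⟩
    · exact ih (v := m ++ b) (by rw [ha, append_assoc])
    · obtain ⟨w₁, w₂, rfl, hmw₁, hmw₂⟩ := List.map_eq_append_iff.mp hw
      rcases eq_or_ne w₂ [] with rfl | hw₂
      · exact ih (v := b) (by rw [← hmw₁]; simp)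
      · rw [← hmw₂] at hlb
        have hmem : FreeMonoid.ofList w₁ ∈
            Submonoid.closure {p : FreeMonoid X | p ≠ 1 ∧ ∃ t ∈ T, ∃ q, t = p * q} :=
          ih (v := b) (by rw [← hmw₁])
        obtain ⟨t, rfl | rfl⟩ := r
        · have h'' : et T t ++ ([rt T t] ++ b) = w₂.map Sum.inl ++ v := by
            simpa [append_assoc] using hlb
          have hp : FreeMonoid.ofList w₂ ∈
              {p : FreeMonoid X | p ≠ 1 ∧ ∃ t ∈ T, ∃ q, t = p * q} := by
            rcases append_eq_append_iff.mp h'' with ⟨m₂, hw₂', hrb⟩ | ⟨m₂, het, hv⟩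
            · obtain ⟨x₁, x₂, rfl, hx₁, hx₂⟩ := List.map_eq_append_iff.mp hw₂'
              rcases x₂ with _ | ⟨z, x₂'⟩
              · refine mem_prefix_set (t := t) (q := []) ?_ hw₂
                rw [← map_inj_et hx₁]; simp
              · exfalso
                have : [rt T t] ++ b = (Sum.inl z :: x₂'.map Sum.inl) ++ v := by
                  rw [hrb, ← hx₂]; simp
                have := (List.cons_eq_cons.mp this).1
                simp [rt] at this
            · obtain ⟨y₁, y₂, hty, hy₁, hy₂⟩ := List.map_eq_append_iff.mp het
              have hwy : y₁ = w₂ := List.map_injective_iff.mpr Sum.inl_injective hy₁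
              exact mem_prefix_set (q := y₂) (by rw [hty, hwy]) hw₂
          rw [ofList_append']
          exact Submonoid.mul_mem _ hmem (Submonoid.subset_closure hp)
        · exfalso
          rcases w₂ with _ | ⟨z, w₂'⟩
          · exact hw₂ rfl
          · have : rt T t :: (et T t ++ b) = Sum.inl z :: (w₂'.map Sum.inl ++ v) := by
              simpa [append_assoc] using hlb
            have := (List.cons_eq_cons.mp this).1
            simp [rt] at this

lemma extract_suffix : ∀ {u : List (X ⊕ ↥T)},
    Relation.ReflTransGen (Step T) u [] →
    ∀ {w : List X} {v : List (X ⊕ ↥T)}, u = v ++ w.map Sum.inl →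
    FreeMonoid.ofList w ∈
      Submonoid.closure {q : FreeMonoid X | q ≠ 1 ∧ ∃ t ∈ T, ∃ p, t = p * q} := by
  intro u hu
  induction hu using Relation.ReflTransGen.head_induction_on with
  | refl =>
    intro w v h
    have hw : w = [] := by
      have := (append_eq_nil_iff.mp h.symm).2
      cases w with
      | nil => rfl
      | cons a w' => simp at this
    subst hw
    simpa using Submonoid.one_mem _
  | head hstep htail ih =>
    intro w v h
    obtain ⟨a, l, b, r, hu', rfl⟩ := hstep
    rw [hu'] at h
    rcases append_eq_append_iff.mp h with ⟨m, hv, hb⟩ | ⟨m, hal, hmap⟩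
    · exact ih (v := a ++ m) (by rw [hb, append_assoc])
    · obtain ⟨w₁, w₂, rfl, hmw₁, hmw₂⟩ := List.map_eq_append_iff.mp hmap
      rcases eq_or_ne w₁ [] with rfl | hw₁
      · have : FreeMonoid.ofList w₂ ∈
            Submonoid.closure {q : FreeMonoid X | q ≠ 1 ∧ ∃ t ∈ T, ∃ p, t = p * q} :=
          ih (v := a) (by rw [← hmw₂])
        simpa using this
      · rw [← hmw₁] at hal
        have hmem : FreeMonoid.ofList w₂ ∈
            Submonoid.closure {q : FreeMonoid X | q ≠ 1 ∧ ∃ t ∈ T, ∃ p, t = p * q} :=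
          ih (v := a) (by rw [← hmw₂])
        obtain ⟨t, rfl | rfl⟩ := r
        · exfalso
          rcases eq_nil_or_concat w₁ with rfl | ⟨w₁', z, rfl⟩
          · exact hw₁ rfl
          · have h'' : (a ++ et T t) ++ [rt T t] =
                (v ++ w₁'.map Sum.inl) ++ [Sum.inl z] := by
              simpa [concat_eq_append, append_assoc] using hal
            have := (append_inj' h'' rfl).2
            simp [rt] at this
        · have h'' : (a ++ [rt T t]) ++ et T t = v ++ w₁.map Sum.inl := by
            simpa [append_assoc] using hal
          have hq : FreeMonoid.ofList w₁ ∈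
              {q : FreeMonoid X | q ≠ 1 ∧ ∃ t ∈ T, ∃ p, t = p * q} := by
            rcases append_eq_append_iff.mp h'' with ⟨m₂, hv₂, het⟩ | ⟨m₂, har, hm₁⟩
            · obtain ⟨y₁, y₂, hty, hy₁, hy₂⟩ := List.map_eq_append_iff.mp het
              have hwy : y₂ = w₁ := List.map_injective_iff.mpr Sum.inl_injective hy₂
              exact mem_suffix_set (p := y₁) (by rw [hty, hwy]) hw₁
            · rcases eq_nil_or_concat m₂ with rfl | ⟨m₀, x, rfl⟩
              · refine mem_suffix_set (t := t) (p := []) ?_ hw₁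
                rw [← map_inj_et (by simpa using hm₁)]; simp
              · exfalso
                have h₃ : a ++ [rt T t] = (v ++ m₀) ++ [x] := by
                  simpa [concat_eq_append, append_assoc] using har
                have hx : x = rt T t := by simpa using (append_inj' h₃ rfl).2.symm
                have : rt T t ∈ w₁.map Sum.inl := by
                  rw [hm₁, ← hx]; simp [concat_eq_append]
                exact inr_not_mem_map this
          rw [ofList_append']
          exact Submonoid.mul_mem _ (Submonoid.subset_closure hq) hmem


lemma right_easy {w : FreeMonoid X}
    (hw : w ∈ Submonoid.closure {p : FreeMonoid X | p ≠ 1 ∧ ∃ t ∈ T, ∃ q, t = p * q}) :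
    ∃ v, natHom T w * v = 1 := by
  induction hw using Submonoid.closure_induction with
  | mem x hx =>
    obtain ⟨-, t, ht, q, htq⟩ := hx
    refine ⟨natHom T q * invElt T ⟨t, ht⟩, ?_⟩
    have key : natHom T t * invElt T ⟨t, ht⟩ = 1 := by
      show (invCon T).mk' (emb T t) * (invCon T).mk' (igen T ⟨t, ht⟩) = (invCon T).mk' 1
      rw [← map_mul]
      exact ((invCon T).eq).mpr (ConGen.Rel.of _ _ (InvRel.mul_inv ⟨t, ht⟩))
    rw [← mul_assoc, ← map_mul (natHom T), ← htq, key]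
  | one => exact ⟨1, by simp⟩
  | mul x y hx hy ihx ihy =>
    obtain ⟨vx, hvx⟩ := ihx
    obtain ⟨vy, hvy⟩ := ihy
    exact ⟨vy * vx, by rw [map_mul, mul_assoc, ← mul_assoc (natHom T y), hvy, one_mul, hvx]⟩

lemma left_easy {w : FreeMonoid X}
    (hw : w ∈ Submonoid.closure {q : FreeMonoid X | q ≠ 1 ∧ ∃ t ∈ T, ∃ p, t = p * q}) :
    ∃ v, v * natHom T w = 1 := by
  induction hw using Submonoid.closure_induction with
  | mem x hx =>
    obtain ⟨-, t, ht, p, htp⟩ := hx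
    refine ⟨invElt T ⟨t, ht⟩ * natHom T p, ?_⟩
    have key : invElt T ⟨t, ht⟩ * natHom T t = 1 := by
      show (invCon T).mk' (igen T ⟨t, ht⟩) * (invCon T).mk' (emb T t) = (invCon T).mk' 1
      rw [← map_mul]
      exact ((invCon T).eq).mpr (ConGen.Rel.of _ _ (InvRel.inv_mul ⟨t, ht⟩))
    rw [mul_assoc, ← map_mul (natHom T), ← htp, key]
  | one => exact ⟨1, by simp⟩
  | mul x y hx hy ihx ihy =>
    obtain ⟨vx, hvx⟩ := ihx
    obtain ⟨vy, hvy⟩ := ihy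
    exact ⟨vy * vx, by rw [map_mul, mul_assoc, ← mul_assoc vx, hvx, one_mul, hvy]⟩

lemma right_hard (h1 : (1:FreeMonoid X) ∉ T) (hT : ∀ u ∈ T, ∀ v ∈ T, ¬ Overlap u v)
    {w : FreeMonoid X} (h : ∃ v, natHom T w * v = 1) :
    w ∈ Submonoid.closure {p : FreeMonoid X | p ≠ 1 ∧ ∃ t ∈ T, ∃ q, t = p * q} := by
  obtain ⟨v, hv⟩ := h
  obtain ⟨v', rfl⟩ := Con.mk'_surjective v
  have h2 : (invCon T).mk' (emb T w * v') = (invCon T).mk' 1 := by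
    rw [map_mul, map_one]; exact hv
  have hcon := ((invCon T).eq).mp h2
  have hred := reduces_to_nil h1 hT hcon
  have hsplit : FreeMonoid.toList (emb T w * v') =
      (FreeMonoid.toList w).map Sum.inl ++ FreeMonoid.toList v' := by
    simp [emb, FreeMonoid.toList_mul, FreeMonoid.toList_map]
  simpa using extract_prefix hred hsplit

lemma left_hard (h1 : (1:FreeMonoid X) ∉ T) (hT : ∀ u ∈ T, ∀ v ∈ T, ¬ Overlap u v)
    {w : FreeMonoid X} (h : ∃ v, v * natHom T w = 1) :
    w ∈ Submonoid.closure {q : FreeMonoid X | q ≠ 1 ∧ ∃ t ∈ T, ∃ p, t = p * q} := by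
  obtain ⟨v, hv⟩ := h
  obtain ⟨v', rfl⟩ := Con.mk'_surjective v
  have h2 : (invCon T).mk' (v' * emb T w) = (invCon T).mk' 1 := by
    rw [map_mul, map_one]; exact hv
  have hcon := ((invCon T).eq).mp h2
  have hred := reduces_to_nil h1 hT hcon
  have hsplit : FreeMonoid.toList (v' * emb T w) =
      FreeMonoid.toList v' ++ (FreeMonoid.toList w).map Sum.inl := by
    simp [emb, FreeMonoid.toList_mul, FreeMonoid.toList_map]
  simpa using extract_suffix hred hsplit

end Scratch

/-- an element `w` of `⟨X⟩` becomes right invertible in `⟨X : i(T)⟩` iff it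
is a product of nonempty prefixes of elements of `T`; dually with suffixes. -/
theorem stmt6 (X : Type*) (T : Set (FreeMonoid X))
    (h1 : (1 : FreeMonoid X) ∉ T) (hT : OverlapFree T) (w : FreeMonoid X) :
    ((∃ v, natHom T w * v = 1) ↔
      w ∈ Submonoid.closure {p : FreeMonoid X | p ≠ 1 ∧ ∃ t ∈ T, ∃ q, t = p * q}) ∧
    ((∃ v, v * natHom T w = 1) ↔
      w ∈ Submonoid.closure {q : FreeMonoid X | q ≠ 1 ∧ ∃ t ∈ T, ∃ p, t = p * q}) := by
  constructor
  · exact ⟨fun h => Scratch.right_hard h1 hT h, fun h => Scratch.right_easy h⟩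
  · exact ⟨fun h => Scratch.left_hard h1 hT h, fun h => Scratch.left_easy h⟩

end AdjoinInverses
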